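/- Let A be a unital C*-algebra, let φ be a state on A, and let p₁, …, pₙ be mutually orthogonal projections in A (pᵢ* = pᵢ = pᵢ² and pᵢpⱼ = 0 for i ≠ j) with p = p₁ + … + pₙ. If φ is supported by p, i.e. φ(1 − p) = 0, then for every positive element a of A one has φ(a) ≤ ∑'ᵢ (1/φ(pᵢ)) φ(pᵢ a pᵢ), where the sum ∑' is taken over those indices i with φ(pᵢ) > 0. -/

import Mathlib

set_option synthInstance.maxHeartbeats 400000
set_option maxHeartbeats 800000

open scoped ComplexOrder

section Aux

variable {A : Type*} [NormedRing A] [StarRing A] [CStarRing A]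
    [NormedAlgebra ℂ A] [StarModule ℂ A] [CompleteSpace A]

private lemma aux_im (φ : A →ₗ[ℂ] ℂ) (hφpos : ∀ b : A, 0 ≤ φ (star b * b)) (z : A) :
    (φ (star z * z)).im = 0 := (Complex.nonneg_iff.1 (hφpos z)).2.symm

private lemma aux_conj (φ : A →ₗ[ℂ] ℂ) (hφpos : ∀ b : A, 0 ≤ φ (star b * b)) :
    ∀ x y : A, (starRingEnd ℂ) (φ (star y * x)) = φ (star x * y) := by
  have him := aux_im φ hφpos
  have key1 : ∀ x y : A, (φ (star x * y)).im + (φ (star y * x)).im = 0 := by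
    intro x y
    have h := him (x + y)
    have hexp : star (x + y) * (x + y)
        = star x * x + (star x * y + (star y * x + star y * y)) := by
      rw [star_add]; noncomm_ring
    rw [hexp, map_add, map_add, map_add] at h
    simp only [Complex.add_im] at h
    have h1 := him x; have h2 := him y
    linarith
  have key2 : ∀ x y : A, (φ (star x * y)).re = (φ (star y * x)).re := by
    intro x y
    have h := key1 x ((Complex.I : ℂ) • y)
    have e1 : star x * ((Complex.I : ℂ) • y) = (Complex.I : ℂ) • (star x * y) :=
      mul_smul_comm _ _ _
    have e2 : star ((Complex.I : ℂ) • y) * x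
        = (starRingEnd ℂ Complex.I) • (star y * x) := by
      rw [star_smul, smul_mul_assoc]; rfl
    rw [e1, e2, map_smul, map_smul] at h
    simp only [Complex.conj_I, smul_eq_mul, Complex.mul_im, Complex.I_re, Complex.I_im,
      Complex.neg_re, Complex.neg_im, neg_mul, zero_mul, one_mul, mul_zero] at h
    linarith
  intro x y
  apply Complex.ext
  · simpa [Complex.conj_re] using (key2 x y).symm
  · have h := key1 x y
    simp only [Complex.conj_im]
    linarith

private lemma aux_cs (φ : A →ₗ[ℂ] ℂ) (hφpos : ∀ b : A, 0 ≤ φ (star b * b)) (x y : A) :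
    ‖φ (star x * y)‖ ^ 2 ≤ (φ (star x * x)).re * (φ (star y * y)).re := by
  letI c : PreInnerProductSpace.Core ℂ A :=
    { inner := fun u v => φ (star u * v)
      conj_inner_symm := fun u v => aux_conj φ hφpos u v
      re_inner_nonneg := fun u => (Complex.nonneg_iff.1 (hφpos u)).1
      add_left := fun u v w =>
        show φ (star (u + v) * w) = φ (star u * w) + φ (star v * w) by
          rw [star_add, add_mul, map_add]
      smul_left := fun u v r =>
        show φ (star (r • u) * v) = (starRingEnd ℂ) r * φ (star u * v) by
          rw [star_smul, smul_mul_assoc, map_smul, smul_eq_mul]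
          rfl }
  letI : Inner ℂ A := InnerProductSpace.Core.toPreInner'
  have h := InnerProductSpace.Core.inner_mul_inner_self_le (𝕜 := ℂ) (F := A) x y
  have hsymm : ‖(inner ℂ y x : ℂ)‖ = ‖(inner ℂ x y : ℂ)‖ :=
    InnerProductSpace.Core.norm_inner_symm y x
  calc ‖φ (star x * y)‖ ^ 2 = ‖(inner ℂ x y : ℂ)‖ * ‖(inner ℂ y x : ℂ)‖ := by
        rw [hsymm, sq]; rfl
    _ ≤ _ := h

end Aux

/-- **Corollary 1.3.** Let `φ` be a state on a unital C*-algebra `A` and let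
`p₁, …, pₙ` be mutually orthogonal projections in `A` with `p = p₁ + … + pₙ`.
If `φ` is supported by `p`, i.e. `φ(1 - p) = 0`, then for every positive element `a`
of `A`, `φ(a) ≤ ∑'ᵢ (1/φ(pᵢ)) φ(pᵢ a pᵢ)`, the sum taken over those `i` with
`φ(pᵢ) > 0`.  (Here we use the convention `1/0 = 0` in `ℂ`, which has exactly the
effect of omitting the terms with `φ(pᵢ) = 0`.) -/
theorem stmt_2 {A : Type*} [NormedRing A] [StarRing A] [CStarRing A]
    [NormedAlgebra ℂ A] [StarModule ℂ A] [CompleteSpace A]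
    (φ : A →ₗ[ℂ] ℂ) (hφpos : ∀ b : A, 0 ≤ φ (star b * b)) (hφ1 : φ 1 = 1)
    (n : ℕ) (p : Fin n → A)
    (hsa : ∀ i, star (p i) = p i) (hidem : ∀ i, p i * p i = p i)
    (horth : ∀ i j, i ≠ j → p i * p j = 0)
    (hsupp : φ (1 - ∑ i, p i) = 0)
    (a : A) (ha : ∃ b : A, a = star b * b) :
    φ a ≤ ∑ i, (1 / φ (p i)) * φ (p i * a * p i) := by
  obtain ⟨b, hb⟩ := ha
  have hconj := aux_conj φ hφpos
  have hcs := aux_cs φ hφpos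
  have him := aux_im φ hφpos
  set P : A := ∑ i, p i with hP
  have hPstar : star P = P := by
    rw [hP, star_sum]; exact Finset.sum_congr rfl fun i _ => hsa i
  have hPmul : ∀ i : Fin n, p i * P = p i := by
    intro i
    rw [hP, Finset.mul_sum]
    rw [Finset.sum_eq_single i (fun j _ hj => horth i j (Ne.symm hj)) (by simp)]
    exact hidem i
  have hPP : P * P = P := by
    nth_rw 1 [hP]
    rw [Finset.sum_mul]
    exact Finset.sum_congr rfl fun i _ => hPmul i
  set q : A := 1 - P with hq
  have hqstar : star q = q := by rw [hq]; simp [hPstar]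
  have hqq : q * q = q := by
    rw [hq, sub_mul, one_mul, mul_sub, mul_one, hPP]; abel
  have hφq : φ q = 0 := hsupp
  have hql : ∀ y : A, φ (q * y) = 0 := by
    intro y
    have h := hcs q y
    rw [hqstar, hqq, hφq] at h
    simp only [Complex.zero_re, zero_mul] at h
    have h0 : ‖φ (q * y)‖ = 0 := by nlinarith [norm_nonneg (φ (q * y))]
    rw [← hqstar]
    exact norm_eq_zero.mp (by rw [hqstar]; exact h0)
  have hqr : ∀ y : A, φ (y * q) = 0 := by
    intro y
    have h := hconj (star y) q
    rw [star_star, hqstar] at h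
    rw [← h, hql (star y), map_zero]
  -- t and σ, basic positivity facts
  have hpt : ∀ i, φ (p i) = ((φ (p i)).re : ℂ) := by
    intro i
    have h1 : star (p i) * p i = p i := by rw [hsa i, hidem i]
    have := him (p i)
    rw [h1] at this
    exact Complex.ext (by simp) (by simp [this])
  have htnn : ∀ i, 0 ≤ (φ (p i)).re := by
    intro i
    have h1 : star (p i) * p i = p i := by rw [hsa i, hidem i]
    have := (Complex.nonneg_iff.1 (hφpos (p i))).1
    rwa [h1] at this
  have hxij : ∀ i j, p i * a * p j = star (b * p i) * (b * p j) := by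
    intro i j
    rw [star_mul, hsa i, hb]
    noncomm_ring
  have hps : ∀ i, φ (p i * a * p i) = (((φ (p i * a * p i)).re : ℝ) : ℂ) := by
    intro i
    have := him (b * p i)
    rw [← hxij i i] at this
    exact Complex.ext (by simp) (by simp [this])
  have hσnn : ∀ i, 0 ≤ (φ (p i * a * p i)).re := by
    intro i
    have := (Complex.nonneg_iff.1 (hφpos (b * p i))).1
    rwa [← hxij i i] at this
  have hcs' : ∀ i j, ‖φ (p i * a * p j)‖ ^ 2
      ≤ (φ (p i * a * p i)).re * (φ (p j * a * p j)).re := by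
    intro i j
    have h := hcs (b * p i) (b * p j)
    rwa [← hxij i j, ← hxij i i, ← hxij j j] at h
  have hzero : ∀ i, (φ (p i)).re = 0 → (φ (p i * a * p i)).re = 0 := by
    intro i hti
    have h := hcs (p i) (a * p i)
    have h1 : star (p i) * p i = p i := by rw [hsa i, hidem i]
    have h2 : star (p i) * (a * p i) = p i * a * p i := by rw [hsa i, mul_assoc]
    rw [h1, h2, hti, zero_mul] at h
    have h0 : ‖φ (p i * a * p i)‖ = 0 := by nlinarith [norm_nonneg (φ (p i * a * p i))]
    rw [norm_eq_zero.mp h0]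
    simp
  have hT : ∑ i, (φ (p i)).re = 1 := by
    have hPone : φ P = 1 := by
      have h := hφq
      rw [hq, map_sub, hφ1, sub_eq_zero] at h
      exact h.symm
    have : (φ P).re = 1 := by rw [hPone, Complex.one_re]
    rw [hP, map_sum, Complex.re_sum] at this
    exact this
  -- reduce φ a to a double sum
  have hφa : φ a = ∑ i, ∑ j, φ (p i * a * p j) := by
    have hsplit : a = P * a * P + (q * (a * P) + (q * (a * q) + (P * a) * q)) := by
      rw [hq]; noncomm_ring
    have : φ a = φ (P * a * P) := by
      conv_lhs => rw [hsplit]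
      rw [map_add, map_add, map_add, hql, hql, hqr, add_zero, add_zero, add_zero]
    rw [this]
    have hPaP : P * a * P = ∑ i, ∑ j, p i * a * p j := by
      rw [hP, Finset.sum_mul, Finset.sum_mul]
      refine Finset.sum_congr rfl fun i _ => ?_
      rw [Finset.mul_sum]
    rw [hPaP, map_sum]
    exact Finset.sum_congr rfl fun i _ => map_sum φ _ _
  -- the real inequality
  set t : Fin n → ℝ := fun i => (φ (p i)).re with ht
  set σ : Fin n → ℝ := fun i => (φ (p i * a * p i)).re with hσ
  have pair : ∀ i j : Fin n, (φ (p i * a * p j)).re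
      ≤ 1 / 2 * (t j * (1 / t i * σ i) + t i * (1 / t j * σ j)) := by
    intro i j
    rcases eq_or_lt_of_le (htnn i) with hi | hi
    · have hti : t i = 0 := hi.symm
      have hσi : σ i = 0 := hzero i hi.symm
      have hc : φ (p i * a * p j) = 0 := by
        have h : ‖φ (p i * a * p j)‖ ^ 2 ≤ σ i * σ j := hcs' i j
        rw [hσi, zero_mul] at h
        have h0 : ‖φ (p i * a * p j)‖ = 0 := by nlinarith [norm_nonneg (φ (p i * a * p j))]
        exact norm_eq_zero.mp h0
      rw [hc, hσi, hti]
      simp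
    rcases eq_or_lt_of_le (htnn j) with hj | hj
    · have htj : t j = 0 := hj.symm
      have hσj : σ j = 0 := hzero j hj.symm
      have hc : φ (p i * a * p j) = 0 := by
        have h : ‖φ (p i * a * p j)‖ ^ 2 ≤ σ i * σ j := hcs' i j
        rw [hσj, mul_zero] at h
        have h0 : ‖φ (p i * a * p j)‖ = 0 := by nlinarith [norm_nonneg (φ (p i * a * p j))]
        exact norm_eq_zero.mp h0
      rw [hc, hσj, htj]
      simp
    · have hti : (0:ℝ) < t i := hi
      have htj : (0:ℝ) < t j := hj
      have hre : (φ (p i * a * p j)).re ≤ ‖φ (p i * a * p j)‖ := Complex.re_le_norm _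
      have hnn : 0 ≤ ‖φ (p i * a * p j)‖ := norm_nonneg _
      have hcs2 : ‖φ (p i * a * p j)‖ ^ 2 ≤ σ i * σ j := hcs' i j
      have hσi : (0:ℝ) ≤ σ i := hσnn i
      have hσj : (0:ℝ) ≤ σ j := hσnn j
      have hkey : (φ (p i * a * p j)).re
          ≤ (t j ^ 2 * σ i + t i ^ 2 * σ j) / (2 * (t i * t j)) := by
        rw [le_div_iff₀ (by positivity)]
        have h4 : (t i * t j * ‖φ (p i * a * p j)‖) ^ 2
            ≤ (t j ^ 2 * σ i) * (t i ^ 2 * σ j) := by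
          have h5 := mul_le_mul_of_nonneg_left hcs2 (sq_nonneg (t i * t j))
          nlinarith [h5]
        have hXnn : (0:ℝ) ≤ t j ^ 2 * σ i := by positivity
        have hYnn : (0:ℝ) ≤ t i ^ 2 * σ j := by positivity
        have hmul : (φ (p i * a * p j)).re * (2 * (t i * t j))
            ≤ ‖φ (p i * a * p j)‖ * (2 * (t i * t j)) := by
          have : (0:ℝ) ≤ 2 * (t i * t j) := by positivity
          exact mul_le_mul_of_nonneg_right hre this
        have hfin : ‖φ (p i * a * p j)‖ * (2 * (t i * t j))
            ≤ t j ^ 2 * σ i + t i ^ 2 * σ j := by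
          nlinarith [h4, sq_nonneg (t j ^ 2 * σ i - t i ^ 2 * σ j),
            mul_nonneg (mul_nonneg hti.le htj.le) hnn, hXnn, hYnn]
        exact hmul.trans hfin
      refine hkey.trans (le_of_eq ?_)
      field_simp
  have hsum_pair : ∑ i, ∑ j, (φ (p i * a * p j)).re
      ≤ ∑ i, 1 / t i * σ i := by
    have step1 : ∑ i, ∑ j, (φ (p i * a * p j)).re
        ≤ ∑ i, ∑ j, (1 / 2 * (t j * (1 / t i * σ i) + t i * (1 / t j * σ j))) :=
      Finset.sum_le_sum fun i _ => Finset.sum_le_sum fun j _ => pair i j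
    refine step1.trans (le_of_eq ?_)
    have inner_eq : ∀ i : Fin n,
        ∑ j, (1 / 2 * (t j * (1 / t i * σ i) + t i * (1 / t j * σ j)))
        = 1 / 2 * (1 / t i * σ i) + 1 / 2 * t i * (∑ j, 1 / t j * σ j) := by
      intro i
      have : ∀ j : Fin n, 1 / 2 * (t j * (1 / t i * σ i) + t i * (1 / t j * σ j))
          = t j * (1 / 2 * (1 / t i * σ i)) + (1 / t j * σ j) * (1 / 2 * t i) := by
        intro j; ring
      rw [Finset.sum_congr rfl fun j _ => this j, Finset.sum_add_distrib,
        ← Finset.sum_mul, ← Finset.sum_mul, hT]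
      ring
    rw [Finset.sum_congr rfl fun i _ => inner_eq i, Finset.sum_add_distrib,
      ← Finset.mul_sum]
    have : ∑ i, 1 / 2 * t i * (∑ j, 1 / t j * σ j)
        = (∑ i, t i) * (1 / 2 * (∑ j, 1 / t j * σ j)) := by
      rw [Finset.sum_mul]
      exact Finset.sum_congr rfl fun i _ => by ring
    rw [this, hT]
    ring
  -- put things together over ℂ
  have hRHS : ∑ i, (1 / φ (p i)) * φ (p i * a * p i)
      = ((∑ i, 1 / t i * σ i : ℝ) : ℂ) := by
    push_cast
    refine Finset.sum_congr rfl fun i _ => ?_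
    rw [hpt i, hps i]
    all_goals try push_cast
    all_goals try ring
  have haim : φ a = (((φ a).re : ℝ) : ℂ) := by
    have := him b
    rw [← hb] at this
    exact Complex.ext (by simp) (by simp [this])
  rw [hRHS, haim]
  rw [Complex.real_le_real]
  have hre : (φ a).re = ∑ i, ∑ j, (φ (p i * a * p j)).re := by
    rw [hφa, Complex.re_sum]
    exact Finset.sum_congr rfl fun i _ => Complex.re_sum _ _
  rw [hre]
  exact hsum_pair
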